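/- Let T be a junction tree and suppose a new clique V of size n+1 is added between cliques X and Y (each of size n, |X ∩ Y| = n−1) whenever X and Y are (n−1)-connected, creating a cycle that is then broken by removing an edge with separator of size n−1 on the path between X and Y. The resulting graph is again a junction tree (a tree satisfying the running intersection property). -/

import Mathlib

open scoped Classical

/-- A probability distribution on binary vectors over `Fin K`. -/
def IsDistribution {K : ℕ} (p : (Fin K → Bool) → ℝ) : Prop :=
  (∀ v, 0 ≤ p v) ∧ ∑ v, p v = 1

/-- Marginal probability of the event "agrees with `v` on the itemset `X`". -/
noncomputable def margAt {K : ℕ} (p : (Fin K → Bool) → ℝ) (X : Finset (Fin K))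
    (v : Fin K → Bool) : ℝ :=
  ∑ w : Fin K → Bool, if ∀ i ∈ X, w i = v i then p w else 0

/-- Frequency of an itemset: probability that all its attributes are 1. -/
noncomputable def pAll {K : ℕ} (p : (Fin K → Bool) → ℝ) (X : Finset (Fin K)) : ℝ :=
  margAt p X (fun _ => true)

/-- Empirical entropy of the marginal of `q` on the itemset `X`. -/
noncomputable def entX {K : ℕ} (q : (Fin K → Bool) → ℝ) (X : Finset (Fin K)) : ℝ :=
  -∑ v : {i // i ∈ X} → Bool,
    (∑ w : Fin K → Bool, if ∀ i : {i // i ∈ X}, w i.1 = v i then q w else 0) *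
      Real.log (∑ w : Fin K → Bool, if ∀ i : {i // i ∈ X}, w i.1 = v i then q w else 0)

/-- Entropy of a distribution on the full space. -/
noncomputable def entDist {K : ℕ} (p : (Fin K → Bool) → ℝ) : ℝ :=
  -∑ v : Fin K → Bool, p v * Real.log (p v)

def DownwardClosed {K : ℕ} (𝒢 : Finset (Finset (Fin K))) : Prop :=
  ∀ X ∈ 𝒢, ∀ Y ⊆ X, Y ∈ 𝒢

def Covers {K : ℕ} (𝒢 : Finset (Finset (Fin K))) : Prop :=
  ∀ a : Fin K, ∃ X ∈ 𝒢, a ∈ X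

/-- A junction tree (forest) over the family `𝒢`: an acyclic graph on the members of `𝒢`
whose edges join intersecting cliques, such that cliques sharing an attribute are connected,
and satisfying the running intersection property. -/
def IsJunctionTree {K : ℕ} (𝒢 : Finset (Finset (Fin K)))
    (G : SimpleGraph {C // C ∈ 𝒢}) : Prop :=
  G.IsAcyclic ∧
  (∀ X Y, G.Adj X Y → (X.1 ∩ Y.1).Nonempty) ∧
  (∀ (X Y : {C // C ∈ 𝒢}) (a : Fin K), a ∈ X.1 → a ∈ Y.1 → G.Reachable X Y) ∧
  (∀ (X Y : {C // C ∈ 𝒢}) (a : Fin K), a ∈ X.1 → a ∈ Y.1 →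
    ∀ w : G.Walk X Y, w.IsPath → ∀ Z ∈ w.support, a ∈ Z.1)

def Decomposable {K : ℕ} (𝒢 : Finset (Finset (Fin K))) : Prop :=
  ∃ G : SimpleGraph {C // C ∈ 𝒢}, IsJunctionTree 𝒢 G

noncomputable def sepEnt {K : ℕ} (q : (Fin K → Bool) → ℝ) {𝒢 : Finset (Finset (Fin K))}
    (e : Sym2 {C // C ∈ 𝒢}) : ℝ :=
  Sym2.lift ⟨fun X Y => entX q (X.1 ∩ Y.1), fun X Y => congrArg (entX q) (Finset.inter_comm _ _)⟩ e

/-- Entropy of a junction tree: sum over cliques minus sum over separators. -/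
noncomputable def treeEnt {K : ℕ} (q : (Fin K → Bool) → ℝ) (𝒢 : Finset (Finset (Fin K)))
    (G : SimpleGraph {C // C ∈ 𝒢}) : ℝ :=
  (∑ C : {C // C ∈ 𝒢}, entX q C.1) - ∑ e ∈ G.edgeFinset, sepEnt q e

/-- The junction tree distribution: product of clique marginals over product of
separator marginals. -/
noncomputable def jtDist {K : ℕ} (q : (Fin K → Bool) → ℝ) (𝒢 : Finset (Finset (Fin K)))
    (G : SimpleGraph {C // C ∈ 𝒢}) (v : Fin K → Bool) : ℝ :=
  (∏ C : {C // C ∈ 𝒢}, margAt q C.1 v) /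
    ∏ e ∈ G.edgeFinset,
      Sym2.lift ⟨fun X Y => margAt q (X.1 ∩ Y.1) v,
        fun X Y => congrArg (fun S => margAt q S v) (Finset.inter_comm _ _)⟩ e

/-- A function on full binary vectors that only depends on the attributes in `C`. -/
def DependsOnlyOn {K : ℕ} (p : (Fin K → Bool) → ℝ) (C : Finset (Fin K)) : Prop :=
  ∀ v w, (∀ i ∈ C, v i = w i) → p v = p w

/-- Empirical distribution of a dataset of `N` transactions. -/
noncomputable def empirical {K N : ℕ} (D : Fin N → (Fin K → Bool)) :
    (Fin K → Bool) → ℝ :=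
  fun v => ((Finset.univ.filter (fun t => D t = v)).card : ℝ) / N


section ModifyTreeAux

open SimpleGraph

/-- Membership in the edge set of `deleteEdges`. -/
lemma mem_edgeSet_deleteEdges_iff {α : Type*} {G : SimpleGraph α} {s : Set (Sym2 α)}
    {e : Sym2 α} : e ∈ (G.deleteEdges s).edgeSet ↔ e ∈ G.edgeSet ∧ e ∉ s := by
  induction e using Sym2.ind with
  | _ x y => simp [SimpleGraph.mem_edgeSet]

/-- Splitting a path at a dart: the two pieces avoid the dart's edge and stay in the
support of the original path. -/
lemma dart_split {α : Type*} {G : SimpleGraph α} :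
    ∀ {u v : α} (w : G.Walk u v), w.IsPath → ∀ d : G.Dart, d ∈ w.darts →
      ∃ (w₁ : G.Walk u d.toProd.1) (w₂ : G.Walk d.toProd.2 v),
        s(d.toProd.1, d.toProd.2) ∉ w₁.edges ∧ s(d.toProd.1, d.toProd.2) ∉ w₂.edges ∧
        (∀ z ∈ w₁.support, z ∈ w.support) ∧ ∀ z ∈ w₂.support, z ∈ w.support := by
  intro u v w
  induction w with
  | nil =>
    intro _ d hd
    simp [Walk.darts_nil] at hd
  | @cons u v' v'' h p ih =>
    intro hwp d hd
    rcases List.mem_cons.mp (by rwa [Walk.darts_cons] at hd) with rfl | hd'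
    · refine ⟨Walk.nil, p, by simp, ?_, ?_, ?_⟩
      · intro hcon
        have hu : u ∈ p.support := p.fst_mem_support_of_mem_edges hcon
        exact ((Walk.cons_isPath_iff h p).mp hwp).2 hu
      · intro z hz
        rw [Walk.support_nil] at hz
        rcases List.mem_singleton.mp hz with rfl
        exact Walk.start_mem_support _
      · intro z hz
        rw [Walk.support_cons]
        exact List.mem_cons_of_mem _ hz
    · obtain ⟨w₁, w₂, h1, h2, h3, h4⟩ := ih ((Walk.cons_isPath_iff h p).mp hwp).1 d hd'
      have hnotu : s(d.toProd.1, d.toProd.2) ≠ s(u, v') := by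
        intro hcon
        have hu : u ∈ p.support := by
          rcases Sym2.eq_iff.mp hcon with ⟨ha, hb⟩ | ⟨ha, hb⟩
          · have := Walk.dart_fst_mem_support_of_mem_darts p hd'
            rwa [ha] at this
          · have := Walk.dart_snd_mem_support_of_mem_darts p hd'
            rwa [hb] at this
        exact ((Walk.cons_isPath_iff h p).mp hwp).2 hu
      refine ⟨Walk.cons h w₁, w₂, ?_, h2, ?_, ?_⟩
      · rw [Walk.edges_cons]
        intro hcon
        rcases List.mem_cons.mp hcon with he | he
        · exact hnotu he
        · exact h1 he
      · intro z hz
        rw [Walk.support_cons] at hz ⊢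
        rcases List.mem_cons.mp hz with rfl | hz
        · exact List.mem_cons_self
        · exact List.mem_cons_of_mem _ (h3 z hz)
      · intro z hz
        rw [Walk.support_cons]
        exact List.mem_cons_of_mem _ (h4 z hz)

/-- Pulling back a walk avoiding the special vertex `V'` along the embedding `ι`. -/
lemma pull_walk {α β : Type*} {G : SimpleGraph α} {H : SimpleGraph β}
    (ι : α → β) (hinj : Function.Injective ι) (V' : β)
    (hdich : ∀ b : β, b = V' ∨ ∃ a, b = ι a)
    (hadj : ∀ a a' : α, H.Adj (ι a) (ι a') → G.Adj a a') :
    ∀ {A B : β} (p : H.Walk A B), V' ∉ p.support → ∀ {a b : α}, A = ι a → B = ι b →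
      ∃ q : G.Walk a b, ∀ e ∈ q.edges, Sym2.map ι e ∈ p.edges := by
  intro A B p
  induction p with
  | nil =>
    intro _ a b ha hb
    obtain rfl : a = b := hinj (ha.symm.trans hb)
    exact ⟨Walk.nil, by simp⟩
  | @cons A C B h p ih =>
    intro hs a b ha hb
    have hsC : V' ∉ p.support := fun hc => hs (by
      rw [Walk.support_cons]; exact List.mem_cons_of_mem _ hc)
    have hCne : C ≠ V' := by
      intro hC
      exact hs (by
        rw [Walk.support_cons]
        exact List.mem_cons_of_mem _ (hC ▸ p.start_mem_support))
    obtain ⟨c, rfl⟩ := (hdich C).resolve_left hCne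
    subst ha hb
    obtain ⟨q, hq⟩ := ih hsC rfl rfl
    refine ⟨Walk.cons (hadj a c h) q, ?_⟩
    intro e he
    rw [Walk.edges_cons] at he ⊢
    rcases List.mem_cons.mp he with rfl | he
    · rw [Sym2.map_pair_eq]
      exact List.mem_cons_self
    · exact List.mem_cons_of_mem _ (hq e he)

set_option maxHeartbeats 1600000 in
theorem modify_tree_core {K n : ℕ} (hn : 1 ≤ n) (𝒢 : Finset (Finset (Fin K)))
    (G : SimpleGraph {C // C ∈ 𝒢}) (hG : IsJunctionTree 𝒢 G)
    (hsize : ∀ C ∈ 𝒢, C.card ≤ n + 1)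
    (X Y : {C // C ∈ 𝒢}) (hne : X ≠ Y)
    (hX : X.1.card = n) (hY : Y.1.card = n) (hXY : (X.1 ∩ Y.1).card = n - 1)
    (hV : X.1 ∪ Y.1 ∉ 𝒢)
    (w : G.Walk X Y) (hw : w.IsPath) (d : G.Dart) (hd : d ∈ w.darts)
    (hdsep : ((d.toProd.1).1 ∩ (d.toProd.2).1).card = n - 1)
    (ι : {C // C ∈ 𝒢} → {C // C ∈ insert (X.1 ∪ Y.1) 𝒢}) (hι : ∀ C, (ι C).1 = C.1)
    (V' : {C // C ∈ insert (X.1 ∪ Y.1) 𝒢}) (hV' : V'.1 = X.1 ∪ Y.1) :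
    IsJunctionTree (insert (X.1 ∪ Y.1) 𝒢)
      (SimpleGraph.fromEdgeSet
        ((Sym2.map ι '' (G.edgeSet \ {s(d.toProd.1, d.toProd.2)})) ∪
          {s(V', ι X), s(V', ι Y)})) := by
  obtain ⟨hac, hint, hreach, hrip⟩ := hG
  set ed : Sym2 {C // C ∈ 𝒢} := s(d.toProd.1, d.toProd.2) with hed_def
  set H : SimpleGraph {C // C ∈ insert (X.1 ∪ Y.1) 𝒢} :=
    SimpleGraph.fromEdgeSet
      ((Sym2.map ι '' (G.edgeSet \ {ed})) ∪ {s(V', ι X), s(V', ι Y)}) with hH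
  set G₀ : SimpleGraph {C // C ∈ 𝒢} := G.deleteEdges {ed} with hG₀
  -- basic facts about ι and V'
  have hinj : Function.Injective ι := by
    intro a b hab
    apply Subtype.ext
    rw [← hι a, ← hι b, hab]
  have hιne : ∀ C, ι C ≠ V' := by
    intro C hC
    have h1 : C.1 = X.1 ∪ Y.1 := by rw [← hι C, hC, hV']
    exact hV (h1 ▸ C.2)
  have hdich : ∀ A : {C // C ∈ insert (X.1 ∪ Y.1) 𝒢}, A = V' ∨ ∃ a, A = ι a := by
    intro A
    rcases Finset.mem_insert.mp A.2 with h | h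
    · exact Or.inl (Subtype.ext (h.trans hV'.symm))
    · exact Or.inr ⟨⟨A.1, h⟩, Subtype.ext (by rw [hι])⟩
  -- adjacency characterizations
  have hG₀adj : ∀ a b, G₀.Adj a b ↔ (G.Adj a b ∧ s(a, b) ≠ ed) := by
    intro a b
    simp [hG₀, SimpleGraph.deleteEdges_adj]
  have hadjιι : ∀ a b, H.Adj (ι a) (ι b) ↔ (G.Adj a b ∧ s(a, b) ≠ ed) := by
    intro a b
    rw [hH, SimpleGraph.fromEdgeSet_adj]
    constructor
    · rintro ⟨hmem, hne'⟩
      rcases (Set.mem_union _ _ _).mp hmem with himg | hpair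
      · obtain ⟨e, he, heq⟩ := himg
        revert he heq
        induction e using Sym2.ind with
        | _ x y =>
          intro he heq
          rw [Sym2.map_pair_eq] at heq
          rcases Sym2.eq_iff.mp heq with ⟨h1, h2⟩ | ⟨h1, h2⟩
          · obtain rfl := hinj h1
            obtain rfl := hinj h2
            exact ⟨G.mem_edgeSet.mp he.1, by simpa using he.2⟩
          · obtain rfl := hinj h1
            obtain rfl := hinj h2
            refine ⟨(G.mem_edgeSet.mp he.1).symm, ?_⟩
            intro hcon
            apply he.2
            rw [Set.mem_singleton_iff, Sym2.eq_swap]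
            exact hcon
      · rcases Set.mem_insert_iff.mp hpair with hp | hp
        · rcases Sym2.eq_iff.mp hp with ⟨h1, _⟩ | ⟨_, h2⟩
          · exact absurd h1 (hιne a)
          · exact absurd h2 (hιne b)
        · rcases Sym2.eq_iff.mp (Set.mem_singleton_iff.mp hp) with ⟨h1, _⟩ | ⟨_, h2⟩
          · exact absurd h1 (hιne a)
          · exact absurd h2 (hιne b)
    · rintro ⟨hab, hne'⟩
      refine ⟨Set.mem_union_left _ ⟨s(a, b), ⟨G.mem_edgeSet.mpr hab, by
        simpa using hne'⟩, Sym2.map_pair_eq ι a b⟩, fun hc => hab.ne (hinj hc)⟩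
  have hadjV : ∀ B, H.Adj V' B ↔ (B = ι X ∨ B = ι Y) := by
    intro B
    rw [hH, SimpleGraph.fromEdgeSet_adj]
    constructor
    · rintro ⟨hmem, hne'⟩
      rcases (Set.mem_union _ _ _).mp hmem with himg | hpair
      · obtain ⟨e, he, heq⟩ := himg
        revert he heq
        induction e using Sym2.ind with
        | _ x y =>
          intro he heq
          rw [Sym2.map_pair_eq] at heq
          rcases Sym2.eq_iff.mp heq with ⟨h1, _⟩ | ⟨_, h2⟩
          · exact absurd h1 (hιne x)
          · exact absurd h2 (hιne y)
      · rcases Set.mem_insert_iff.mp hpair with hp | hp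
        · rcases Sym2.eq_iff.mp hp with ⟨_, h2⟩ | ⟨h1, _⟩
          · exact Or.inl h2
          · exact absurd h1.symm (hιne X)
        · rcases Sym2.eq_iff.mp (Set.mem_singleton_iff.mp hp) with ⟨_, h2⟩ | ⟨h1, _⟩
          · exact Or.inr h2
          · exact absurd h1.symm (hιne Y)
    · rintro (rfl | rfl)
      · exact ⟨Set.mem_union_right _ (Set.mem_insert _ _), (hιne X).symm⟩
      · exact ⟨Set.mem_union_right _ (Set.mem_insert_of_mem _ rfl), (hιne Y).symm⟩
  have hAdjVX : H.Adj V' (ι X) := (hadjV _).mpr (Or.inl rfl)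
  have hAdjVY : H.Adj V' (ι Y) := (hadjV _).mpr (Or.inr rfl)
  -- the separator of the removed dart equals X ∩ Y
  have hsub : X.1 ∩ Y.1 ⊆ (d.toProd.1).1 ∩ (d.toProd.2).1 := by
    intro t ht
    have h1 := (Finset.mem_inter.mp ht).1
    have h2 := (Finset.mem_inter.mp ht).2
    have hall := hrip X Y t h1 h2 w hw
    exact Finset.mem_inter.mpr
      ⟨hall _ (Walk.dart_fst_mem_support_of_mem_darts w hd),
       hall _ (Walk.dart_snd_mem_support_of_mem_darts w hd)⟩
  have hXYeq : (d.toProd.1).1 ∩ (d.toProd.2).1 = X.1 ∩ Y.1 :=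
    (Finset.eq_of_subset_of_card_le hsub (le_of_eq (hdsep.trans hXY.symm))).symm
  -- split the walk w at the dart d
  obtain ⟨w₁, w₂, hw₁ed, hw₂ed, hw₁supp, hw₂supp⟩ := dart_split w hw d hd
  -- walks in G₀
  have hw₁sub : ∀ e ∈ w₁.edges, e ∈ G₀.edgeSet := by
    intro e he
    rw [hG₀, mem_edgeSet_deleteEdges_iff]
    refine ⟨w₁.edges_subset_edgeSet he, ?_⟩
    rw [Set.mem_singleton_iff]
    intro hc
    apply hw₁ed
    rw [hed_def] at hc
    exact hc ▸ he
  have hw₂sub : ∀ e ∈ w₂.edges, e ∈ G₀.edgeSet := by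
    intro e he
    rw [hG₀, mem_edgeSet_deleteEdges_iff]
    refine ⟨w₂.edges_subset_edgeSet he, ?_⟩
    rw [Set.mem_singleton_iff]
    intro hc
    apply hw₂ed
    rw [hed_def] at hc
    exact hc ▸ he
  set q₁ : G₀.Walk X d.toProd.1 := w₁.transfer G₀ hw₁sub with hq₁
  set q₂ : G₀.Walk d.toProd.2 Y := w₂.transfer G₀ hw₂sub with hq₂
  -- X and Y are not reachable in G₀
  have hbridge := (SimpleGraph.isAcyclic_iff_forall_adj_isBridge.mp hac) d.adj
  have hnreachXY : ¬ G₀.Reachable X Y := by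
    rintro ⟨q⟩
    have hqsub : ∀ e ∈ q.edges, e ∈ G.edgeSet := fun e he =>
      (mem_edgeSet_deleteEdges_iff.mp (q.edges_subset_edgeSet he)).1
    have hall := (SimpleGraph.isBridge_iff_adj_and_forall_walk_mem_edges.mp hbridge)
    have hmem := hall (w₁.reverse.append ((q.transfer G hqsub).append w₂.reverse))
    rw [Walk.edges_append, Walk.edges_append] at hmem
    rcases List.mem_append.mp hmem with hmem | hmem
    · rw [Walk.edges_reverse, List.mem_reverse] at hmem
      exact hw₁ed hmem
    · rcases List.mem_append.mp hmem with hmem | hmem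
      · rw [Walk.edges_transfer] at hmem
        have := (mem_edgeSet_deleteEdges_iff.mp (q.edges_subset_edgeSet hmem)).2
        exact this rfl
      · rw [Walk.edges_reverse, List.mem_reverse] at hmem
        exact hw₂ed hmem
  -- the homomorphism G₀ → H
  let f : G₀ →g H := ⟨ι, fun {a b} hab => (hadjιι a b).mpr ((hG₀adj a b).mp hab)⟩
  have hf : ∀ a, f a = ι a := fun _ => rfl
  -- ACYCLICITY
  have hpull : ∀ {A B} (p : H.Walk A B), V' ∉ p.support →
      ∀ {a b : {C // C ∈ 𝒢}}, A = ι a → B = ι b →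
      ∃ q : G₀.Walk a b, ∀ e ∈ q.edges, Sym2.map ι e ∈ p.edges :=
    fun p hp => pull_walk ι hinj V' hdich
      (fun a b h => (hG₀adj a b).mpr ((hadjιι a b).mp h)) p hp
  have hHac : H.IsAcyclic := by
    intro v₀ c hc
    by_cases hmem : V' ∈ c.support
    · obtain ⟨c', hc'⟩ : ∃ c' : H.Walk V' V', c'.IsCycle :=
        ⟨c.rotate V' hmem, hc.rotate hmem⟩
      cases c' with
      | nil => exact Walk.IsCycle.not_of_nil hc'
      | @cons _ u _ h₁ t =>
        have htp : t.IsPath := ((Walk.cons_isCycle_iff t h₁).mp hc').1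
        have hu : u = ι X ∨ u = ι Y := (hadjV u).mp h₁
        have h3 := hc'.three_le_length
        rw [Walk.length_cons] at h3
        obtain ⟨r, hrpath, hrlen⟩ : ∃ r : H.Walk V' u, r.IsPath ∧ r.length = t.length :=
          ⟨t.reverse, htp.reverse, t.length_reverse⟩
        cases r with
        | nil =>
          rcases hu with hu | hu
          · exact hιne X hu.symm
          · exact hιne Y hu.symm
        | @cons _ u' _ h₂ r' =>
          have hu' : u' = ι X ∨ u' = ι Y := (hadjV u').mp h₂
          have hr' : r'.IsPath ∧ V' ∉ r'.support := (Walk.cons_isPath_iff h₂ r').mp hrpath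
          by_cases hcase : u' = u
          · subst hcase
            have : r' = Walk.nil := (Walk.isPath_iff_eq_nil (p := r')).mp hr'.1
            subst this
            rw [Walk.length_cons, Walk.length_nil] at hrlen
            omega
          · rcases hu with rfl | rfl
            · rcases hu' with rfl | rfl
              · exact hcase rfl
              · obtain ⟨q, _⟩ := hpull r' hr'.2 rfl rfl
                exact hnreachXY ⟨q.reverse⟩
            · rcases hu' with rfl | rfl
              · obtain ⟨q, _⟩ := hpull r' hr'.2 rfl rfl
                exact hnreachXY ⟨q⟩
              · exact hcase rfl
    · have hv₀ : v₀ ≠ V' := fun h => hmem (h ▸ c.start_mem_support)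
      obtain ⟨a₀, rfl⟩ := (hdich v₀).resolve_left hv₀
      cases c with
      | nil => exact Walk.IsCycle.not_of_nil hc
      | @cons _ u _ h₁ t =>
        have htp : t.IsPath := ((Walk.cons_isCycle_iff t h₁).mp hc).1
        have hednotin : s(ι a₀, u) ∉ t.edges := ((Walk.cons_isCycle_iff t h₁).mp hc).2
        have htV' : V' ∉ t.support := fun h => hmem (by
          rw [Walk.support_cons]; exact List.mem_cons_of_mem _ h)
        have hune : u ≠ V' := fun h => htV' (h ▸ t.start_mem_support)
        obtain ⟨b₀, rfl⟩ := (hdich u).resolve_left hune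
        obtain ⟨hGab, _⟩ := (hadjιι a₀ b₀).mp h₁
        obtain ⟨q, hq⟩ := hpull t htV' rfl rfl
        have havoid : s(a₀, b₀) ∉ q.edges := by
          intro hcon
          have := hq _ hcon
          rw [Sym2.map_pair_eq] at this
          exact hednotin this
        have hqsub : ∀ e ∈ q.edges, e ∈ G.edgeSet := fun e he =>
          (mem_edgeSet_deleteEdges_iff.mp (q.edges_subset_edgeSet he)).1
        have hbr := (SimpleGraph.isAcyclic_iff_forall_adj_isBridge.mp hac) hGab
        have hall := (SimpleGraph.isBridge_iff_adj_and_forall_walk_mem_edges.mp hbr)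
        have hmem2 := hall (q.transfer G hqsub).reverse
        rw [Walk.edges_reverse, List.mem_reverse, Walk.edges_transfer] at hmem2
        exact havoid hmem2
  -- replacement route through V' when the removed edge is needed
  have route : ∀ t : Fin K, t ∈ X.1 ∩ Y.1 →
      ∃ R : H.Walk (ι d.toProd.1) (ι d.toProd.2), ∀ Z ∈ R.support, t ∈ Z.1 := by
    intro t ht
    have htX := (Finset.mem_inter.mp ht).1
    have htY := (Finset.mem_inter.mp ht).2
    have hw_all : ∀ Z ∈ w.support, t ∈ Z.1 := hrip X Y t htX htY w hw
    refine ⟨(q₁.map f).reverse.append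
      (Walk.cons hAdjVX.symm (Walk.cons hAdjVY (q₂.map f).reverse)), ?_⟩
    intro Z hZ
    rcases (Walk.mem_support_append_iff _ _).mp hZ with hZ | hZ
    · rw [Walk.support_reverse, List.mem_reverse, Walk.support_map, hq₁,
        Walk.support_transfer] at hZ
      obtain ⟨z, hz, rfl⟩ := List.mem_map.mp hZ
      rw [hf, hι]
      exact hw_all z (hw₁supp z hz)
    · rw [Walk.support_cons] at hZ
      rcases List.mem_cons.mp hZ with rfl | hZ
      · rw [hf, hι]
        exact htX
      · rw [Walk.support_cons] at hZ
        rcases List.mem_cons.mp hZ with rfl | hZ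
        · rw [hV']
          exact Finset.mem_union_left _ htX
        · rw [Walk.support_reverse, List.mem_reverse, Walk.support_map, hq₂,
            Walk.support_transfer] at hZ
          obtain ⟨z, hz, rfl⟩ := List.mem_map.mp hZ
          rw [hf, hι]
          exact hw_all z (hw₂supp z hz)
  -- pushing a walk of G whose support carries attribute t into H
  have push : ∀ (t : Fin K) {a b : {C // C ∈ 𝒢}} (p : G.Walk a b),
      (∀ Z ∈ p.support, t ∈ Z.1) →
      ∃ q : H.Walk (ι a) (ι b), ∀ Z ∈ q.support, t ∈ Z.1 := by
    intro t a b p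
    induction p with
    | nil =>
      intro h
      refine ⟨Walk.nil, ?_⟩
      intro Z hZ
      rw [Walk.support_nil] at hZ
      rcases List.mem_singleton.mp hZ with rfl
      rw [hι]
      exact h _ (Walk.start_mem_support _)
    | @cons a' c b' hadj p ih =>
      intro h
      have hta : t ∈ a'.1 := h _ (Walk.start_mem_support _)
      have hsupp' : ∀ Z ∈ p.support, t ∈ Z.1 := fun Z hZ => h Z (by
        rw [Walk.support_cons]; exact List.mem_cons_of_mem _ hZ)
      have htc : t ∈ c.1 := hsupp' _ (Walk.start_mem_support _)
      obtain ⟨q', hq'⟩ := ih hsupp'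
      by_cases hedc : s(a', c) = ed
      · rcases Sym2.eq_iff.mp hedc with ⟨h1, h2⟩ | ⟨h1, h2⟩
        · subst h1; subst h2
          have htXY : t ∈ X.1 ∩ Y.1 := hXYeq ▸ Finset.mem_inter.mpr ⟨hta, htc⟩
          obtain ⟨R, hR⟩ := route t htXY
          refine ⟨R.append q', ?_⟩
          intro Z hZ
          rcases (Walk.mem_support_append_iff _ _).mp hZ with hZ | hZ
          · exact hR Z hZ
          · exact hq' Z hZ
        · subst h1; subst h2
          have htXY : t ∈ X.1 ∩ Y.1 := hXYeq ▸ Finset.mem_inter.mpr ⟨htc, hta⟩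
          obtain ⟨R, hR⟩ := route t htXY
          refine ⟨R.reverse.append q', ?_⟩
          intro Z hZ
          rcases (Walk.mem_support_append_iff _ _).mp hZ with hZ | hZ
          · rw [Walk.support_reverse, List.mem_reverse] at hZ
            exact hR Z hZ
          · exact hq' Z hZ
      · refine ⟨Walk.cons ((hadjιι a' c).mpr ⟨hadj, hedc⟩) q', ?_⟩
        intro Z hZ
        rw [Walk.support_cons] at hZ
        rcases List.mem_cons.mp hZ with rfl | hZ
        · rw [hι]
          exact hta
        · exact hq' Z hZ
  -- good walks between any two cliques sharing an attribute
  have goodι : ∀ (a b : {C // C ∈ 𝒢}) (t : Fin K), t ∈ a.1 → t ∈ b.1 →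
      ∃ q : H.Walk (ι a) (ι b), ∀ Z ∈ q.support, t ∈ Z.1 := by
    intro a b t ha hb
    obtain ⟨p0⟩ := hreach a b t ha hb
    exact push t p0.bypass (hrip a b t ha hb p0.bypass p0.bypass_isPath)
  have goodV : ∀ (b : {C // C ∈ 𝒢}) (t : Fin K), t ∈ V'.1 → t ∈ b.1 →
      ∃ q : H.Walk V' (ι b), ∀ Z ∈ q.support, t ∈ Z.1 := by
    intro b t ha hb
    have ht' : t ∈ X.1 ∪ Y.1 := hV' ▸ ha
    rcases Finset.mem_union.mp ht' with htX | htY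
    · obtain ⟨q, hq⟩ := goodι X b t htX hb
      refine ⟨Walk.cons hAdjVX q, ?_⟩
      intro Z hZ
      rw [Walk.support_cons] at hZ
      rcases List.mem_cons.mp hZ with rfl | hZ
      · exact ha
      · exact hq Z hZ
    · obtain ⟨q, hq⟩ := goodι Y b t htY hb
      refine ⟨Walk.cons hAdjVY q, ?_⟩
      intro Z hZ
      rw [Walk.support_cons] at hZ
      rcases List.mem_cons.mp hZ with rfl | hZ
      · exact ha
      · exact hq Z hZ
  have good : ∀ (A B : {C // C ∈ insert (X.1 ∪ Y.1) 𝒢}) (t : Fin K),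
      t ∈ A.1 → t ∈ B.1 → ∃ q : H.Walk A B, ∀ Z ∈ q.support, t ∈ Z.1 := by
    intro A B t hA hB
    rcases hdich A with rfl | ⟨a, rfl⟩
    · rcases hdich B with rfl | ⟨b, rfl⟩
      · refine ⟨Walk.nil, ?_⟩
        intro Z hZ
        rw [Walk.support_nil] at hZ
        rcases List.mem_singleton.mp hZ with rfl
        exact hA
      · exact goodV b t hA (by rwa [hι] at hB)
    · rcases hdich B with rfl | ⟨b, rfl⟩
      · obtain ⟨q, hq⟩ := goodV a t hB (by rwa [hι] at hA)
        refine ⟨q.reverse, ?_⟩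
        intro Z hZ
        rw [Walk.support_reverse, List.mem_reverse] at hZ
        exact hq Z hZ
      · exact goodι a b t (by rwa [hι] at hA) (by rwa [hι] at hB)
  -- assemble the four properties
  refine ⟨hHac, ?_, ?_, ?_⟩
  · -- adjacent cliques intersect
    intro A B hAB
    rcases hdich A with rfl | ⟨a, rfl⟩
    · rcases (hadjV B).mp hAB with rfl | rfl
      · obtain ⟨x, hx⟩ := Finset.card_pos.mp (by rw [hX]; omega)
        exact ⟨x, Finset.mem_inter.mpr ⟨by rw [hV']; exact Finset.mem_union_left _ hx,
          by rw [hι]; exact hx⟩⟩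
      · obtain ⟨y, hy⟩ := Finset.card_pos.mp (by rw [hY]; omega)
        exact ⟨y, Finset.mem_inter.mpr ⟨by rw [hV']; exact Finset.mem_union_right _ hy,
          by rw [hι]; exact hy⟩⟩
    · rcases hdich B with rfl | ⟨b, rfl⟩
      · rcases (hadjV (ι a)).mp hAB.symm with h | h
        · obtain rfl := hinj h
          obtain ⟨x, hx⟩ := Finset.card_pos.mp (by rw [hX]; omega)
          exact ⟨x, Finset.mem_inter.mpr ⟨by rw [hι]; exact hx,
            by rw [hV']; exact Finset.mem_union_left _ hx⟩⟩
        · obtain rfl := hinj h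
          obtain ⟨y, hy⟩ := Finset.card_pos.mp (by rw [hY]; omega)
          exact ⟨y, Finset.mem_inter.mpr ⟨by rw [hι]; exact hy,
            by rw [hV']; exact Finset.mem_union_right _ hy⟩⟩
      · obtain ⟨hGab, _⟩ := (hadjιι a b).mp hAB
        obtain ⟨x, hx⟩ := hint a b hGab
        exact ⟨x, by
          rw [Finset.mem_inter] at hx
          exact Finset.mem_inter.mpr ⟨by rw [hι]; exact hx.1, by rw [hι]; exact hx.2⟩⟩
  · -- cliques sharing an attribute are connected
    intro A B t hA hB
    obtain ⟨q, _⟩ := good A B t hA hB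
    exact ⟨q⟩
  · -- running intersection property
    intro A B t hA hB p hp Z hZ
    obtain ⟨q, hq⟩ := good A B t hA hB
    have huniq := SimpleGraph.isAcyclic_iff_path_unique.mp hHac
      ⟨p, hp⟩ ⟨q.bypass, q.bypass_isPath⟩
    have hpe : p = q.bypass := congrArg Subtype.val huniq
    rw [hpe] at hZ
    exact hq Z (q.support_bypass_subset hZ)

end ModifyTreeAux

/-- Inserting the new clique `V = X ∪ Y` with edges to `X` and `Y` and
breaking the resulting cycle by removing an edge with a separator of size `n - 1` on the
original path between `X` and `Y` yields again a junction tree. -/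
theorem modify_tree {K n : ℕ} (hn : 1 ≤ n) (𝒢 : Finset (Finset (Fin K)))
    (G : SimpleGraph {C // C ∈ 𝒢}) (hG : IsJunctionTree 𝒢 G)
    (hsize : ∀ C ∈ 𝒢, C.card ≤ n + 1)
    (X Y : {C // C ∈ 𝒢}) (hne : X ≠ Y)
    (hX : X.1.card = n) (hY : Y.1.card = n) (hXY : (X.1 ∩ Y.1).card = n - 1)
    (hV : X.1 ∪ Y.1 ∉ 𝒢)
    (w : G.Walk X Y) (hw : w.IsPath) (d : G.Dart) (hd : d ∈ w.darts)
    (hdsep : ((d.toProd.1).1 ∩ (d.toProd.2).1).card = n - 1) :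
    IsJunctionTree (insert (X.1 ∪ Y.1) 𝒢)
      (SimpleGraph.fromEdgeSet
        (let ι : {C // C ∈ 𝒢} → {C // C ∈ insert (X.1 ∪ Y.1) 𝒢} :=
          fun C => ⟨C.1, Finset.mem_insert_of_mem C.2⟩
        let V' : {C // C ∈ insert (X.1 ∪ Y.1) 𝒢} :=
          ⟨X.1 ∪ Y.1, Finset.mem_insert_self _ _⟩
        (Sym2.map ι '' (G.edgeSet \ {s(d.toProd.1, d.toProd.2)})) ∪
          {s(V', ι X), s(V', ι Y)})) := by
  exact modify_tree_core hn 𝒢 G hG hsize X Y hne hX hY hXY hV w hw d hd hdsep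
    (fun C => ⟨C.1, Finset.mem_insert_of_mem C.2⟩) (fun C => rfl)
    ⟨X.1 ∪ Y.1, Finset.mem_insert_self _ _⟩ rfl
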